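/- arXiv:1104.3856 — 2 statements merged into one kernel-verified Lean document; each statement's English description precedes it below -/
import Mathlib

section
/- For every natural number n, 64^n * ∑_{k=0}^n C(-1/4, k)^2 * C(-3/4, n-k)^2 = ∑_{k=0}^n C(2k,k)^3 * C(2(n-k), n-k) * 16^(n-k), where C(-1/4, k) and C(-3/4, k) are generalized binomial coefficients with rational upper arguments. -/
/-- Generalized binomial coefficient `x(x-1)⋯(x-k+1)/k!` for rational `x`. -/
def qchoose (x : ℚ) (k : ℕ) : ℚ :=
  (∏ i ∈ Finset.range k, (x - i)) / (Nat.factorial k)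

lemma qchoose_succ (x : ℚ) (k : ℕ) :
    qchoose x (k+1) = qchoose x k * (x - k) / (k+1) := by
  have h1 : (Nat.factorial k : ℚ) ≠ 0 := Nat.cast_ne_zero.mpr (Nat.factorial_ne_zero k)
  have h2 : ((k:ℚ)+1) ≠ 0 := by positivity
  unfold qchoose
  rw [Finset.prod_range_succ, Nat.factorial_succ]
  push_cast
  rw [div_mul_eq_mul_div, div_div]
  rw [mul_comm ((k:ℚ)+1)]

lemma qchoose_zero (x : ℚ) : qchoose x 0 = 1 := by simp [qchoose]

def cc (k : ℕ) : ℚ := (Nat.choose (2*k) k : ℚ)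

lemma cc_succ (k : ℕ) : cc (k+1) = 2*(2*(k:ℚ)+1)/((k:ℚ)+1) * cc k := by
  have h := Nat.succ_mul_centralBinom_succ k
  simp only [Nat.centralBinom] at h
  have h2 : ((k:ℚ)+1) ≠ 0 := by positivity
  have hq : ((k:ℚ)+1) * cc (k+1) = (2*(2*(k:ℚ)+1)) * cc k := by
    unfold cc
    exact_mod_cast congrArg (Nat.cast : ℕ → ℚ) h
  field_simp
  linarith [hq]

def ff (n k : ℕ) : ℚ := if k ≤ n then cc k ^ 3 * cc (n-k) * 16 ^ (n-k) else 0

def GS (n k : ℕ) : ℚ := (k:ℚ)^3 / (2*(n:ℚ) - 2*k + 3) * ff (n+2) k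

lemma keyS (n k : ℕ) (hk : k < n + 3) :
    ((n:ℚ)+2)^3 * ff (n+2) k - 8*(2*(n:ℚ)+3)*(8*(n:ℚ)^2+24*n+21) * ff (n+1) k
      + 4096*((n:ℚ)+1)^3 * ff n k
    = GS n (k+1) - GS n k := by
  by_cases hkn : k ≤ n
  · obtain ⟨m, rfl⟩ : ∃ m, n = k + m := ⟨n - k, by omega⟩
    have e2 : ff (k+m+2) k = cc k ^ 3 * cc (m+2) * 16 ^ (m+2) := by
      simp only [ff, if_pos (by omega : k ≤ k+m+2), show k+m+2-k = m+2 by omega]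
    have e1 : ff (k+m+1) k = cc k ^ 3 * cc (m+1) * 16 ^ (m+1) := by
      simp only [ff, if_pos (by omega : k ≤ k+m+1), show k+m+1-k = m+1 by omega]
    have e0 : ff (k+m) k = cc k ^ 3 * cc m * 16 ^ m := by
      simp only [ff, if_pos (by omega : k ≤ k+m), show k+m-k = m by omega]
    have e2' : ff (k+m+2) (k+1) = cc (k+1) ^ 3 * cc (m+1) * 16 ^ (m+1) := by
      simp only [ff, if_pos (by omega : k+1 ≤ k+m+2), show k+m+2-(k+1) = m+1 by omega]
    rw [GS, GS, e2, e1, e0, e2', show m+2 = m+1+1 by omega, cc_succ (m+1), cc_succ m,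
      cc_succ k]
    have hM1 : ((m:ℚ)+1) ≠ 0 := by positivity
    have hM2 : ((m:ℚ)+1+1) ≠ 0 := by positivity
    have hK1 : ((k:ℚ)+1) ≠ 0 := by positivity
    have hd1 : (2*(m:ℚ)+3) ≠ 0 := by positivity
    have hd2 : (2*(m:ℚ)+1) ≠ 0 := by positivity
    push_cast
    rw [show 2*((k:ℚ)+m) - 2*(k:ℚ) + 3 = 2*m+3 by ring,
        show 2*((k:ℚ)+m) - 2*((k:ℚ)+1) + 3 = 2*m+1 by ring]
    field_simp
    ring
  · have hk2 : k = n+1 ∨ k = n+2 := by omega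
    rcases hk2 with rfl | rfl
    · have e2 : ff (n+2) (n+1) = cc (n+1) ^ 3 * cc 1 * 16 := by
        simp only [ff, if_pos (by omega : n+1 ≤ n+2), show n+2-(n+1) = 1 by omega, pow_one]
      have e1 : ff (n+1) (n+1) = cc (n+1) ^ 3 := by
        simp only [ff, if_pos (le_refl (n+1)), Nat.sub_self, pow_zero, mul_one]
        norm_num [cc]
      have e0 : ff n (n+1) = 0 := by simp only [ff, if_neg (by omega : ¬ n+1 ≤ n)]
      have e2' : ff (n+2) (n+2) = cc (n+2) ^ 3 := by
        simp only [ff, if_pos (le_refl (n+2)), Nat.sub_self, pow_zero, mul_one]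
        norm_num [cc]
      rw [GS, GS, e2, e1, e0, e2', show n+2 = n+1+1 by omega, cc_succ (n+1)]
      have hc1 : cc 1 = 2 := by norm_num [cc]
      rw [hc1]
      have hK1 : ((n:ℚ)+1+1) ≠ 0 := by positivity
      push_cast
      rw [show 2*(n:ℚ) - 2*((n:ℚ)+1) + 3 = 1 by ring,
          show 2*(n:ℚ) - 2*((n:ℚ)+1+1) + 3 = -1 by ring]
      field_simp
      ring
    · have e2 : ff (n+2) (n+2) = cc (n+2) ^ 3 := by
        simp only [ff, if_pos (le_refl (n+2)), Nat.sub_self, pow_zero, mul_one]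
        norm_num [cc]
      have e1 : ff (n+1) (n+2) = 0 := by simp only [ff, if_neg (by omega : ¬ n+2 ≤ n+1)]
      have e0 : ff n (n+2) = 0 := by simp only [ff, if_neg (by omega : ¬ n+2 ≤ n)]
      have e2' : ff (n+2) (n+3) = 0 := by simp only [ff, if_neg (by omega : ¬ n+3 ≤ n+2)]
      rw [GS, GS, e2, e1, e0, show n+2+1 = n+3 by omega, e2']
      push_cast
      rw [show 2*(n:ℚ) - 2*((n:ℚ)+2) + 3 = -1 by ring]
      field_simp
      ring

def uu (n k : ℕ) : ℚ :=
  if k ≤ n then 64^n * qchoose (-1/4) k ^ 2 * qchoose (-3/4) (n-k) ^ 2 else 0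

def GU (n k : ℕ) : ℚ :=
  (k:ℚ)^2 * (8*(k:ℚ)*((n:ℚ)-k) + 18*k - 3*(n:ℚ) - 6) / (4*(n:ℚ)-4*k+7)^2 * uu (n+2) k

lemma keyU (n k : ℕ) (hk : k < n + 3) :
    ((n:ℚ)+2)^3 * uu (n+2) k - 8*(2*(n:ℚ)+3)*(8*(n:ℚ)^2+24*n+21) * uu (n+1) k
      + 4096*((n:ℚ)+1)^3 * uu n k
    = GU n (k+1) - GU n k := by
  by_cases hkn : k ≤ n
  · obtain ⟨m, rfl⟩ : ∃ m, n = k + m := ⟨n - k, by omega⟩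
    have e2 : uu (k+m+2) k = 64^(k+m+2) * qchoose (-1/4) k ^ 2 * qchoose (-3/4) (m+2) ^ 2 := by
      simp only [uu, if_pos (by omega : k ≤ k+m+2), show k+m+2-k = m+2 by omega]
    have e1 : uu (k+m+1) k = 64^(k+m+1) * qchoose (-1/4) k ^ 2 * qchoose (-3/4) (m+1) ^ 2 := by
      simp only [uu, if_pos (by omega : k ≤ k+m+1), show k+m+1-k = m+1 by omega]
    have e0 : uu (k+m) k = 64^(k+m) * qchoose (-1/4) k ^ 2 * qchoose (-3/4) m ^ 2 := by
      simp only [uu, if_pos (by omega : k ≤ k+m), show k+m-k = m by omega]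
    have e2' : uu (k+m+2) (k+1)
        = 64^(k+m+2) * qchoose (-1/4) (k+1) ^ 2 * qchoose (-3/4) (m+1) ^ 2 := by
      simp only [uu, if_pos (by omega : k+1 ≤ k+m+2), show k+m+2-(k+1) = m+1 by omega]
    rw [GU, GU, e2, e1, e0, e2', show m+2 = m+1+1 by omega, qchoose_succ (-3/4) (m+1),
      qchoose_succ (-3/4) m, qchoose_succ (-1/4) k]
    have hM1 : ((m:ℚ)+1) ≠ 0 := by positivity
    have hM2 : ((m:ℚ)+1+1) ≠ 0 := by positivity
    have hK1 : ((k:ℚ)+1) ≠ 0 := by positivity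
    have hd1 : (4*(m:ℚ)+7) ≠ 0 := by positivity
    have hd2 : (4*(m:ℚ)+3) ≠ 0 := by positivity
    push_cast
    rw [show 4*((k:ℚ)+m) - 4*(k:ℚ) + 7 = 4*m+7 by ring,
        show 4*((k:ℚ)+m) - 4*((k:ℚ)+1) + 7 = 4*m+3 by ring]
    field_simp
    ring
  · have hk2 : k = n+1 ∨ k = n+2 := by omega
    rcases hk2 with rfl | rfl
    · have e2 : uu (n+2) (n+1) = 64^(n+2) * qchoose (-1/4) (n+1) ^ 2 * qchoose (-3/4) 1 ^ 2 := by
        simp only [uu, if_pos (by omega : n+1 ≤ n+2), show n+2-(n+1) = 1 by omega]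
      have e1 : uu (n+1) (n+1) = 64^(n+1) * qchoose (-1/4) (n+1) ^ 2 := by
        simp only [uu, if_pos (le_refl (n+1)), Nat.sub_self, qchoose_zero, one_pow, mul_one]
      have e0 : uu n (n+1) = 0 := by simp only [uu, if_neg (by omega : ¬ n+1 ≤ n)]
      have e2' : uu (n+2) (n+2) = 64^(n+2) * qchoose (-1/4) (n+2) ^ 2 := by
        simp only [uu, if_pos (le_refl (n+2)), Nat.sub_self, qchoose_zero, one_pow, mul_one]
      have hq3 : qchoose (-3/4) 1 = -3/4 := by
        rw [show (1:ℕ) = 0+1 from rfl, qchoose_succ, qchoose_zero]; norm_num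
      rw [GU, GU, e2, e1, e0, e2', show n+2 = n+1+1 by omega, qchoose_succ (-1/4) (n+1), hq3]
      have hK1 : ((n:ℚ)+1+1) ≠ 0 := by positivity
      push_cast
      rw [show (4*(n:ℚ)-4*((n:ℚ)+1)+7)^2 = 9 by ring,
          show (4*(n:ℚ)-4*((n:ℚ)+1+1)+7)^2 = 1 by ring]
      field_simp
      ring
    · have e2 : uu (n+2) (n+2) = 64^(n+2) * qchoose (-1/4) (n+2) ^ 2 := by
        simp only [uu, if_pos (le_refl (n+2)), Nat.sub_self, qchoose_zero, one_pow, mul_one]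
      have e1 : uu (n+1) (n+2) = 0 := by simp only [uu, if_neg (by omega : ¬ n+2 ≤ n+1)]
      have e0 : uu n (n+2) = 0 := by simp only [uu, if_neg (by omega : ¬ n+2 ≤ n)]
      have e2' : uu (n+2) (n+3) = 0 := by simp only [uu, if_neg (by omega : ¬ n+3 ≤ n+2)]
      rw [GU, GU, e2, e1, e0, show n+2+1 = n+3 by omega, e2']
      push_cast
      rw [show (4*(n:ℚ)-4*((n:ℚ)+2)+7)^2 = 1 by ring]
      field_simp
      ring

def Sf (n : ℕ) : ℚ := ∑ k ∈ Finset.range (n+1), ff n k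
def Tu (n : ℕ) : ℚ := ∑ k ∈ Finset.range (n+1), uu n k

lemma sum_ext (g : ℕ → ℕ → ℚ) (hg : ∀ n k, n < k → g n k = 0) (n N : ℕ) (h : n < N) :
    ∑ k ∈ Finset.range N, g n k = ∑ k ∈ Finset.range (n+1), g n k := by
  refine (Finset.sum_subset (Finset.range_subset_range.mpr (by omega)) ?_).symm
  intro x hx hnx
  exact hg n x (by simp only [Finset.mem_range] at hx hnx ⊢; omega)

lemma ff_big (n k : ℕ) (h : n < k) : ff n k = 0 := by
  simp only [ff, if_neg (by omega : ¬ k ≤ n)]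

lemma uu_big (n k : ℕ) (h : n < k) : uu n k = 0 := by
  simp only [uu, if_neg (by omega : ¬ k ≤ n)]

lemma recS (n : ℕ) :
    ((n:ℚ)+2)^3 * Sf (n+2)
      = 8*(2*(n:ℚ)+3)*(8*(n:ℚ)^2+24*n+21) * Sf (n+1) - 4096*((n:ℚ)+1)^3 * Sf n := by
  have key : ∑ k ∈ Finset.range (n+3),
      (((n:ℚ)+2)^3 * ff (n+2) k - 8*(2*(n:ℚ)+3)*(8*(n:ℚ)^2+24*n+21) * ff (n+1) k
        + 4096*((n:ℚ)+1)^3 * ff n k) = 0 := by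
    rw [Finset.sum_congr rfl (fun k hk => keyS n k (Finset.mem_range.mp hk)),
      Finset.sum_range_sub (fun k => GS n k)]
    have h1 : GS n (n+3) = 0 := by
      rw [GS, show n+3 = n+2+1 by omega, ff_big (n+2) (n+2+1) (by omega)]; ring
    have h2 : GS n 0 = 0 := by rw [GS]; push_cast; ring
    rw [h1, h2, sub_zero]
  rw [Finset.sum_add_distrib, Finset.sum_sub_distrib, ← Finset.mul_sum, ← Finset.mul_sum,
    ← Finset.mul_sum] at key
  rw [sum_ext ff ff_big (n+2) (n+3) (by omega)] at key
  rw [sum_ext ff ff_big (n+1) (n+3) (by omega)] at key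
  rw [sum_ext ff ff_big n (n+3) (by omega)] at key
  have e2 : (∑ k ∈ Finset.range (n+2+1), ff (n+2) k) = Sf (n+2) := rfl
  have e1 : (∑ k ∈ Finset.range (n+1+1), ff (n+1) k) = Sf (n+1) := rfl
  have e0 : (∑ k ∈ Finset.range (n+1), ff n k) = Sf n := rfl
  rw [e2, e1, e0] at key
  linarith

lemma recU (n : ℕ) :
    ((n:ℚ)+2)^3 * Tu (n+2)
      = 8*(2*(n:ℚ)+3)*(8*(n:ℚ)^2+24*n+21) * Tu (n+1) - 4096*((n:ℚ)+1)^3 * Tu n := by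
  have key : ∑ k ∈ Finset.range (n+3),
      (((n:ℚ)+2)^3 * uu (n+2) k - 8*(2*(n:ℚ)+3)*(8*(n:ℚ)^2+24*n+21) * uu (n+1) k
        + 4096*((n:ℚ)+1)^3 * uu n k) = 0 := by
    rw [Finset.sum_congr rfl (fun k hk => keyU n k (Finset.mem_range.mp hk)),
      Finset.sum_range_sub (fun k => GU n k)]
    have h1 : GU n (n+3) = 0 := by
      rw [GU, show n+3 = n+2+1 by omega, uu_big (n+2) (n+2+1) (by omega)]; ring
    have h2 : GU n 0 = 0 := by rw [GU]; push_cast; ring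
    rw [h1, h2, sub_zero]
  rw [Finset.sum_add_distrib, Finset.sum_sub_distrib, ← Finset.mul_sum, ← Finset.mul_sum,
    ← Finset.mul_sum] at key
  rw [sum_ext uu uu_big (n+2) (n+3) (by omega)] at key
  rw [sum_ext uu uu_big (n+1) (n+3) (by omega)] at key
  rw [sum_ext uu uu_big n (n+3) (by omega)] at key
  have e2 : (∑ k ∈ Finset.range (n+2+1), uu (n+2) k) = Tu (n+2) := rfl
  have e1 : (∑ k ∈ Finset.range (n+1+1), uu (n+1) k) = Tu (n+1) := rfl
  have e0 : (∑ k ∈ Finset.range (n+1), uu n k) = Tu n := rfl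
  rw [e2, e1, e0] at key
  linarith

lemma qchoose_one (x : ℚ) : qchoose x 1 = x := by
  rw [show (1:ℕ) = 0+1 from rfl, qchoose_succ, qchoose_zero]; norm_num

lemma base0 : Tu 0 = Sf 0 := by
  simp [Tu, Sf, uu, ff, qchoose_zero, cc]

lemma base1 : Tu 1 = Sf 1 := by
  simp [Tu, Sf, Finset.sum_range_succ, uu, ff, qchoose_zero, qchoose_one, cc]
  norm_num

lemma mainTS : ∀ n : ℕ, Tu n = Sf n ∧ Tu (n+1) = Sf (n+1) := by
  intro n
  induction n with
  | zero => exact ⟨base0, base1⟩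
  | succ m ih =>
    refine ⟨ih.2, ?_⟩
    have hS := recS m
    have hU := recU m
    have hne : ((m:ℚ)+2)^3 ≠ 0 := by positivity
    have : ((m:ℚ)+2)^3 * Tu (m+2) = ((m:ℚ)+2)^3 * Sf (m+2) := by
      rw [hS, hU, ih.1, ih.2]
    exact mul_left_cancel₀ hne this

theorem stmt_5 (n : ℕ) :
    (64 : ℚ) ^ n *
      ∑ k ∈ Finset.range (n + 1), (qchoose (-1/4) k) ^ 2 * (qchoose (-3/4) (n - k)) ^ 2
    = ∑ k ∈ Finset.range (n + 1),
        ((Nat.choose (2 * k) k : ℚ) ^ 3 * (Nat.choose (2 * (n - k)) (n - k)) * 16 ^ (n - k)) := by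
  have hl : (64 : ℚ) ^ n *
      ∑ k ∈ Finset.range (n + 1), (qchoose (-1/4) k) ^ 2 * (qchoose (-3/4) (n - k)) ^ 2
      = Tu n := by
    rw [Finset.mul_sum, Tu]
    refine Finset.sum_congr rfl fun k hk => ?_
    rw [uu, if_pos (by simp only [Finset.mem_range] at hk; omega)]
    ring
  have hr : ∑ k ∈ Finset.range (n + 1),
      ((Nat.choose (2 * k) k : ℚ) ^ 3 * (Nat.choose (2 * (n - k)) (n - k)) * 16 ^ (n - k))
      = Sf n := by
    refine Finset.sum_congr rfl fun k hk => ?_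
    rw [ff, if_pos (by simp only [Finset.mem_range] at hk; omega), cc, cc]
  rw [hl, hr, (mainTS n).1]
end

section
/- For any prime p > 3, the sum ∑_{n=0}^{p-1} n * 864^(p-1-n) * ∑_{k=0}^n C(6k,3k) * C(3k,k) * C(6(n-k), 3(n-k)) * C(3(n-k), n-k) is divisible by p^2. -/
open Finset


def aN (k : ℕ) : ℕ := (6*k).choose (3*k) * ((3*k).choose k)
def gN (m : ℕ) : ℕ := aN m * ((2*m).choose m)

lemma aN_fac (k : ℕ) : aN k * ((3*k).factorial * ((2*k).factorial * k.factorial)) = (6*k).factorial := by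
  have h1 : (6*k).choose (3*k) * (3*k).factorial * (3*k).factorial = (6*k).factorial := by
    have := Nat.choose_mul_factorial_mul_factorial (show 3*k ≤ 6*k by omega)
    rwa [show 6*k - 3*k = 3*k by omega] at this
  have h2 : (3*k).choose k * k.factorial * (2*k).factorial = (3*k).factorial := by
    have := Nat.choose_mul_factorial_mul_factorial (show k ≤ 3*k by omega)
    rwa [show 3*k - k = 2*k by omega] at this
  calc aN k * ((3*k).factorial * ((2*k).factorial * k.factorial))
      = (6*k).choose (3*k) * (3*k).factorial * ((3*k).choose k * k.factorial * (2*k).factorial) := by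
        unfold aN; ring
    _ = (6*k).choose (3*k) * (3*k).factorial * (3*k).factorial := by rw [h2]
    _ = (6*k).factorial := h1

lemma gN_fac (m : ℕ) : gN m * ((3*m).factorial * (m.factorial * (m.factorial * m.factorial))) = (6*m).factorial := by
  have h2 : (2*m).choose m * m.factorial * m.factorial = (2*m).factorial := by
    have := Nat.choose_mul_factorial_mul_factorial (show m ≤ 2*m by omega)
    rwa [show 2*m - m = m by omega] at this
  calc gN m * ((3*m).factorial * (m.factorial * (m.factorial * m.factorial)))
      = aN m * ((3*m).factorial * (((2*m).choose m * m.factorial * m.factorial) * m.factorial)) := by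
        unfold gN; ring
    _ = aN m * ((3*m).factorial * ((2*m).factorial * m.factorial)) := by rw [h2]
    _ = (6*m).factorial := aN_fac m

lemma rec_a (k : ℕ) : (k+1)^2 * aN (k+1) = 12*(6*k+1)*(6*k+5) * aN k := by
  have F : 0 < (3*(k+1)).factorial * ((2*(k+1)).factorial * (k+1).factorial) :=
    Nat.mul_pos (Nat.factorial_pos _) (Nat.mul_pos (Nat.factorial_pos _) (Nat.factorial_pos _))
  apply Nat.eq_of_mul_eq_mul_right F
  have e1 : (k+1)^2 * aN (k+1) * ((3*(k+1)).factorial * ((2*(k+1)).factorial * (k+1).factorial))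
      = (k+1)^2 * (6*(k+1)).factorial := by
    rw [mul_assoc ((k+1)^2), aN_fac]
  rw [e1]
  have h6 : (6*(k+1)).factorial
      = (6*k+6)*((6*k+5)*((6*k+4)*((6*k+3)*((6*k+2)*((6*k+1)*(6*k).factorial))))) := by
    rw [show 6*(k+1) = 6*k+5+1 by ring, Nat.factorial_succ]
    rw [show 6*k+5 = 6*k+4+1 by ring, Nat.factorial_succ]
    rw [show 6*k+4 = 6*k+3+1 by ring, Nat.factorial_succ]
    rw [show 6*k+3 = 6*k+2+1 by ring, Nat.factorial_succ]
    rw [show 6*k+2 = 6*k+1+1 by ring, Nat.factorial_succ]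
    rw [show 6*k+1 = 6*k+0+1 by ring, Nat.factorial_succ]

  have h3 : (3*(k+1)).factorial = (3*k+3)*((3*k+2)*((3*k+1)*(3*k).factorial)) := by
    rw [show 3*(k+1) = 3*k+2+1 by ring, Nat.factorial_succ]
    rw [show 3*k+2 = 3*k+1+1 by ring, Nat.factorial_succ]
    rw [show 3*k+1 = 3*k+0+1 by ring, Nat.factorial_succ]

  have h2 : (2*(k+1)).factorial = (2*k+2)*((2*k+1)*(2*k).factorial) := by
    rw [show 2*(k+1) = 2*k+1+1 by ring, Nat.factorial_succ]
    rw [show 2*k+1 = 2*k+0+1 by ring, Nat.factorial_succ]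

  have h1 : (k+1).factorial = (k+1)*k.factorial := Nat.factorial_succ k
  rw [h6, h3, h2, h1]
  calc (k+1)^2 * ((6*k+6)*((6*k+5)*((6*k+4)*((6*k+3)*((6*k+2)*((6*k+1)*(6*k).factorial))))))
      = ((k+1)^2 *(6*k+6)*(6*k+5)*(6*k+4)*(6*k+3)*(6*k+2)*(6*k+1)) * (6*k).factorial := by ring
    _ = ((k+1)^2 *(6*k+6)*(6*k+5)*(6*k+4)*(6*k+3)*(6*k+2)*(6*k+1)) * (aN k * ((3*k).factorial * ((2*k).factorial * k.factorial))) := by rw [aN_fac]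
    _ = 12*(6*k+1)*(6*k+5) * aN k * ((3*k+3)*((3*k+2)*((3*k+1)*(3*k).factorial)) * ((2*k+2)*((2*k+1)*(2*k).factorial) * ((k+1)*k.factorial))) := by ring

lemma rec_g (m : ℕ) : (m+1)^3 * gN (m+1) = 24*(6*m+1)*(2*m+1)*(6*m+5) * gN m := by
  have F : 0 < (3*(m+1)).factorial * ((m+1).factorial * ((m+1).factorial * (m+1).factorial)) :=
    Nat.mul_pos (Nat.factorial_pos _) (Nat.mul_pos (Nat.factorial_pos _) (Nat.mul_pos (Nat.factorial_pos _) (Nat.factorial_pos _)))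
  apply Nat.eq_of_mul_eq_mul_right F
  have e1 : (m+1)^3 * gN (m+1) * ((3*(m+1)).factorial * ((m+1).factorial * ((m+1).factorial * (m+1).factorial)))
      = (m+1)^3 * (6*(m+1)).factorial := by
    rw [mul_assoc ((m+1)^3), gN_fac]
  rw [e1]
  have h6 : (6*(m+1)).factorial
      = (6*m+6)*((6*m+5)*((6*m+4)*((6*m+3)*((6*m+2)*((6*m+1)*(6*m).factorial))))) := by
    rw [show 6*(m+1) = 6*m+5+1 by ring, Nat.factorial_succ]
    rw [show 6*m+5 = 6*m+4+1 by ring, Nat.factorial_succ]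
    rw [show 6*m+4 = 6*m+3+1 by ring, Nat.factorial_succ]
    rw [show 6*m+3 = 6*m+2+1 by ring, Nat.factorial_succ]
    rw [show 6*m+2 = 6*m+1+1 by ring, Nat.factorial_succ]
    rw [show 6*m+1 = 6*m+0+1 by ring, Nat.factorial_succ]
  have h3 : (3*(m+1)).factorial = (3*m+3)*((3*m+2)*((3*m+1)*(3*m).factorial)) := by
    rw [show 3*(m+1) = 3*m+2+1 by ring, Nat.factorial_succ]
    rw [show 3*m+2 = 3*m+1+1 by ring, Nat.factorial_succ]
    rw [show 3*m+1 = 3*m+0+1 by ring, Nat.factorial_succ]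
  have h1 : (m+1).factorial = (m+1)*m.factorial := Nat.factorial_succ m
  rw [h6, h3, h1]
  calc (m+1)^3 * ((6*m+6)*((6*m+5)*((6*m+4)*((6*m+3)*((6*m+2)*((6*m+1)*(6*m).factorial))))))
      = ((m+1)^3 *(6*m+6)*(6*m+5)*(6*m+4)*(6*m+3)*(6*m+2)*(6*m+1)) * (6*m).factorial := by ring
    _ = ((m+1)^3 *(6*m+6)*(6*m+5)*(6*m+4)*(6*m+3)*(6*m+2)*(6*m+1)) * (gN m * ((3*m).factorial * (m.factorial * (m.factorial * m.factorial)))) := by rw [gN_fac]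
    _ = 24*(6*m+1)*(2*m+1)*(6*m+5) * gN m * ((3*m+3)*((3*m+2)*((3*m+1)*(3*m).factorial)) * ((m+1)*m.factorial * ((m+1)*m.factorial * ((m+1)*m.factorial)))) := by ring

def c (n : ℕ) : ℤ := ∑ k ∈ range (n+1), (aN k : ℤ) * (aN (n-k) : ℤ)

lemma rec_a_z (k : ℕ) : ((k:ℤ)+1)^2 * aN (k+1) = (432*(k:ℤ)^2+432*k+60) * aN k := by
  have h := congrArg (Nat.cast : ℕ → ℤ) (rec_a k)
  push_cast at h
  linear_combination h

lemma ptc (m k : ℕ) :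
    ((m:ℤ)+k+2)^3 * (aN k * aN (m+2))
      - (24*(2*((m:ℤ)+k)+3)*(18*((m:ℤ)+k)^2+54*((m:ℤ)+k)+41)) * (aN k * aN (m+1))
      + (20736*((m:ℤ)+k+1)*(3*((m:ℤ)+k)+1)*(3*((m:ℤ)+k)+5)) * (aN k * aN m)
    = (aN (k+1) * ((k:ℤ)+1)^2) * (432*(3*(m:ℤ)+k+2) * aN m - (3*(m:ℤ)+k+4) * aN (m+1))
      - (aN k * (k:ℤ)^2) * (432*(3*(m:ℤ)+k+4) * aN (m+1) - (3*(m:ℤ)+k+6) * aN (m+2)) := by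
  have hRa := rec_a_z k
  have hR1 := rec_a_z m
  have hR2 := rec_a_z (m+1)
  push_cast at hR2
  linear_combination ((3*(m:ℤ)+k+4) * (aN (m+1):ℤ) - 432*(3*(m:ℤ)+k+2) * (aN m:ℤ)) * hRa
    + (-(432*((m:ℤ)+3*k+2)) * (aN k:ℤ)) * hR1 + (((m:ℤ)+3*k+2) * (aN k:ℤ)) * hR2

lemma recc (n : ℕ) : ((n:ℤ)+2)^3 * c (n+2)
    = 24*(2*(n:ℤ)+3)*(18*(n:ℤ)^2+54*(n:ℤ)+41) * c (n+1)
      - 20736*((n:ℤ)+1)*(3*(n:ℤ)+1)*(3*(n:ℤ)+5) * c n := by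
  set Gf : ℕ → ℤ := fun k => (aN k : ℤ) * k^2 *
    (432*(3*(n:ℤ)-2*k+4) * aN (n+1-k) - (3*(n:ℤ)-2*k+6) * aN (n+2-k)) with hGf
  have key : ∀ k ∈ range (n+1),
      ((n:ℤ)+2)^3 * ((aN k:ℤ) * aN (n+2-k))
        - (24*(2*(n:ℤ)+3)*(18*(n:ℤ)^2+54*(n:ℤ)+41)) * ((aN k:ℤ) * aN (n+1-k))
        + (20736*((n:ℤ)+1)*(3*(n:ℤ)+1)*(3*(n:ℤ)+5)) * ((aN k:ℤ) * aN (n-k)) = Gf (k+1) - Gf k := by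
    intro k hk
    have hkn : k ≤ n := by simpa using Nat.lt_succ_iff.mp (mem_range.mp hk)
    obtain ⟨m, rfl⟩ : ∃ m, n = m + k := ⟨n - k, by omega⟩
    simp only [hGf]
    rw [show m+k+2-k = m+2 by omega, show m+k+1-k = m+1 by omega, show m+k-k = m by omega,
      show m+k+1-(k+1) = m by omega, show m+k+2-(k+1) = m+1 by omega]
    have hp := ptc m k
    push_cast
    push_cast at hp
    linear_combination hp
  have htel : ∑ k ∈ range (n+1), (Gf (k+1) - Gf k) = Gf (n+1) - Gf 0 :=
    Finset.sum_range_sub Gf (n+1)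
  have hG0 : Gf 0 = 0 := by simp [hGf]
  have hsum : ∑ k ∈ range (n+1),
      (((n:ℤ)+2)^3 * ((aN k:ℤ) * aN (n+2-k))
        - (24*(2*(n:ℤ)+3)*(18*(n:ℤ)^2+54*(n:ℤ)+41)) * ((aN k:ℤ) * aN (n+1-k))
        + (20736*((n:ℤ)+1)*(3*(n:ℤ)+1)*(3*(n:ℤ)+5)) * ((aN k:ℤ) * aN (n-k))) = Gf (n+1) := by
    rw [Finset.sum_congr rfl key, htel, hG0, sub_zero]
  have hGn1 : Gf (n+1) = (aN (n+1):ℤ) * ((n:ℤ)+1)^2 * (432*((n:ℤ)+2) - 60*((n:ℤ)+4)) := by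
    simp only [hGf]
    rw [show n+1-(n+1) = 0 by omega, show n+2-(n+1) = 1 by omega,
      show aN 0 = 1 by decide, show aN 1 = 60 by decide]
    push_cast
    ring
  rw [hGn1] at hsum
  rw [Finset.sum_add_distrib, Finset.sum_sub_distrib, ← Finset.mul_sum, ← Finset.mul_sum,
    ← Finset.mul_sum] at hsum
  have hc2 : c (n+2) = (∑ k ∈ range (n+1), (aN k:ℤ) * aN (n+2-k))
      + (aN (n+1):ℤ) * 60 + (aN (n+2):ℤ) * 1 := by
    rw [c, Finset.sum_range_succ, Finset.sum_range_succ,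
      show n+2-(n+1) = 1 by omega, show n+2-(n+2) = 0 by omega,
      show aN 0 = 1 by decide, show aN 1 = 60 by decide]
    push_cast
    ring
  have hc1 : c (n+1) = (∑ k ∈ range (n+1), (aN k:ℤ) * aN (n+1-k)) + (aN (n+1):ℤ) * 1 := by
    rw [c, Finset.sum_range_succ, show n+1-(n+1) = 0 by omega, show aN 0 = 1 by decide]
    push_cast
    ring
  have hbdy := rec_a_z (n+1)
  rw [show n+1+1 = n+2 by omega] at hbdy
  push_cast at hbdy
  rw [hc2, hc1, c]
  linear_combination hsum + ((n:ℤ)+2) * hbdy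

def rZ (n : ℕ) : ℤ := ∑ j ∈ range (n+1), (gN (n-j) : ℤ) * ((n-j).choose j : ℤ) * (-432)^j

noncomputable section

def Pb (n j : ℚ) : ℚ := -480 - 1488*j - 2592*j^2 + 1728*j^3 - 9072*n*j + 2592*n*j^2 - 3888*n^2*j
def Pd (j : ℚ) : ℚ := 480 - 4416*j + 10368*j^2 - 6912*j^3
def Pg (n j : ℚ) : ℚ := 2*j^3 - 6*j^2 - 3*n*j^2

def U (n j : ℕ) : ℚ := (gN (n-j) : ℚ) * ((n-j).choose j : ℚ) * (-432)^j
def rQ (n : ℕ) : ℚ := ∑ j ∈ range (n+1), U n j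
def Hf (n j : ℕ) : ℚ := (-432:ℚ)^j * (Pb n j * gN (n+1-j) * ((n+1-j).choose j)
  + Pd j * gN (n+1-j) * ((n+2-j).choose j) + Pg n j * gN (n+2-j) * ((n+2-j).choose j))

lemma rec_g_q (s : ℕ) : ((s:ℚ)+1)^3 * gN (s+1)
    = (1728*(s:ℚ)^3+2592*(s:ℚ)^2+1104*(s:ℚ)+120) * gN s := by
  have h := congrArg (Nat.cast : ℕ → ℚ) (rec_g s)
  push_cast at h
  linear_combination h

lemma rec_g_q2 (s : ℕ) : ((s:ℚ)+2)^3 * gN (s+2)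
    = (1728*((s:ℚ)+1)^3+2592*((s:ℚ)+1)^2+1104*((s:ℚ)+1)+120) * gN (s+1) := by
  have h := rec_g_q (s+1)
  rw [show s+1+1 = s+2 by omega] at h
  push_cast at h
  linear_combination h

lemma cb1 (s j : ℕ) (h : j ≤ s) :
    ((s:ℚ)+1-j) * ((s+1).choose j) = ((s:ℚ)+1) * (s.choose j) := by
  have := congrArg (Nat.cast : ℕ → ℚ) (Nat.choose_mul_succ_eq s j)
  push_cast [Nat.cast_sub (show j ≤ s+1 by omega)] at this
  linear_combination -this

lemma cb0 (s j : ℕ) (h : j ≤ s) :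
    ((j:ℚ)+1) * (s.choose (j+1)) = ((s:ℚ)-j) * (s.choose j) := by
  have := congrArg (Nat.cast : ℕ → ℚ) (Nat.choose_succ_right_eq s j)
  push_cast [Nat.cast_sub h] at this
  linear_combination this

lemma ptr (s j : ℕ) (hj : j ≤ s) :
    ((s:ℚ)+j+2)^3 * (gN (s+2) * ((s+2).choose j) * (-432:ℚ)^j)
      - 24*(2*((s:ℚ)+j)+3)*(18*((s:ℚ)+j)^2+54*((s:ℚ)+j)+41)
          * (gN (s+1) * ((s+1).choose j) * (-432:ℚ)^j)
      + 20736*((s:ℚ)+j+1)*(3*((s:ℚ)+j)+1)*(3*((s:ℚ)+j)+5)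
          * (gN s * (s.choose j) * (-432:ℚ)^j)
    = ((-432:ℚ)^(j+1) * (Pb ((s:ℚ)+j) ((j:ℚ)+1) * gN s * (s.choose (j+1))
        + Pd ((j:ℚ)+1) * gN s * ((s+1).choose (j+1))
        + Pg ((s:ℚ)+j) ((j:ℚ)+1) * gN (s+1) * ((s+1).choose (j+1))))
      - ((-432:ℚ)^j * (Pb ((s:ℚ)+j) j * gN (s+1) * ((s+1).choose j)
        + Pd j * gN (s+1) * ((s+2).choose j)
        + Pg ((s:ℚ)+j) j * gN (s+2) * ((s+2).choose j))) := by
  have hjs : (j:ℚ) ≤ (s:ℚ) := by exact_mod_cast hj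
  have d1 : ((s:ℚ)+1) ≠ 0 := by positivity
  have d2 : ((s:ℚ)+2) ≠ 0 := by positivity
  have d3 : ((s:ℚ)+1-j) ≠ 0 := by
    have : (0:ℚ) ≤ (j:ℚ) := by positivity
    intro hc; nlinarith
  have d4 : ((s:ℚ)+2-j) ≠ 0 := by intro hc; nlinarith
  have d5 : ((j:ℚ)+1) ≠ 0 := by positivity
  have e1 : (gN (s+1):ℚ) = (1728*(s:ℚ)^3+2592*(s:ℚ)^2+1104*(s:ℚ)+120) * gN s / ((s:ℚ)+1)^3 := by
    rw [eq_div_iff (by positivity)]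
    linear_combination rec_g_q s
  have e2 : (gN (s+2):ℚ) = (1728*((s:ℚ)+1)^3+2592*((s:ℚ)+1)^2+1104*((s:ℚ)+1)+120) * gN (s+1) / ((s:ℚ)+2)^3 := by
    rw [eq_div_iff (by positivity)]
    linear_combination rec_g_q2 s
  have f1 : (((s+1).choose j : ℕ):ℚ) = ((s:ℚ)+1) * (s.choose j) / ((s:ℚ)+1-j) := by
    rw [eq_div_iff d3]
    linear_combination cb1 s j hj
  have f2 : (((s+2).choose j : ℕ):ℚ) = ((s:ℚ)+2) * ((s+1).choose j) / ((s:ℚ)+2-j) := by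
    rw [eq_div_iff d4]
    have := cb1 (s+1) j (by omega)
    push_cast at this
    linear_combination this
  have f01 : ((s.choose (j+1) : ℕ):ℚ) = ((s:ℚ)-j) * (s.choose j) / ((j:ℚ)+1) := by
    rw [eq_div_iff d5]
    linear_combination cb0 s j hj
  have f11 : (((s+1).choose (j+1) : ℕ):ℚ) = ((s:ℚ)+1-j) * ((s+1).choose j) / ((j:ℚ)+1) := by
    rw [eq_div_iff d5]
    have := cb0 (s+1) j (by omega)
    push_cast at this
    linear_combination this
  rw [pow_succ]
  rw [e2, f2, f11, f01, e1, f1]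
  simp only [Pb, Pd, Pg]
  field_simp
  ring


lemma Uzero (n j : ℕ) (h : n < 2*j) : U n j = 0 := by
  have h1 : n - j < j := by omega
  simp [U, Nat.choose_eq_zero_of_lt h1]

lemma Hf0 (n : ℕ) : Hf n 0 = 0 := by
  simp [Hf, Pb, Pd, Pg]

lemma bdy_even (t : ℕ) : Hf (2*t) (t+1)
    + ((2*(t:ℚ))+2)^3 * U (2*t+2) (t+1)
    - 24*(2*(2*(t:ℚ))+3)*(18*(2*(t:ℚ))^2+54*(2*(t:ℚ))+41) * U (2*t+1) (t+1)
    + 20736*((2*(t:ℚ))+1)*(3*(2*(t:ℚ))+1)*(3*(2*(t:ℚ))+5) * U (2*t) (t+1) = 0 := by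
  rw [Uzero (2*t+1) (t+1) (by omega), Uzero (2*t) (t+1) (by omega)]
  rw [Hf, show 2*t+1-(t+1) = t by omega, show 2*t+2-(t+1) = t+1 by omega]
  rw [U, show 2*t+2-(t+1) = t+1 by omega, Nat.choose_self,
    Nat.choose_eq_zero_of_lt (show t < t+1 by omega)]
  have hg := rec_g_q t
  simp only [Pb, Pd, Pg]
  push_cast
  linear_combination (4 * (-432:ℚ)^(t+1)) * hg

lemma bdy_odd (t : ℕ) : Hf (2*t+1) (t+1)
    + ((2*(t:ℚ)+1)+2)^3 * U (2*t+1+2) (t+1)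
    - 24*(2*(2*(t:ℚ)+1)+3)*(18*(2*(t:ℚ)+1)^2+54*(2*(t:ℚ)+1)+41) * U (2*t+1+1) (t+1)
    + 20736*((2*(t:ℚ)+1)+1)*(3*(2*(t:ℚ)+1)+1)*(3*(2*(t:ℚ)+1)+5) * U (2*t+1) (t+1) = 0 := by
  rw [Uzero (2*t+1) (t+1) (by omega)]
  rw [Hf, show 2*t+1+1-(t+1) = t+1 by omega, show 2*t+1+2-(t+1) = t+2 by omega]
  rw [U, U, show 2*t+1+2-(t+1) = t+2 by omega, show 2*t+1+1-(t+1) = t+1 by omega,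
    Nat.choose_self, Nat.choose_succ_self_right]
  have hg2 := rec_g_q2 t
  rw [show t+2 = t+1+1 by omega] at hg2
  rw [show t+1+1 = t+2 by omega] at hg2
  simp only [Pb, Pd, Pg]
  push_cast
  linear_combination ((4*(t:ℚ)+5) * (-432:ℚ)^(t+1)) * hg2

lemma recr (n : ℕ) : ((n:ℚ)+2)^3 * rQ (n+2)
    = 24*(2*(n:ℚ)+3)*(18*(n:ℚ)^2+54*(n:ℚ)+41) * rQ (n+1)
      - 20736*((n:ℚ)+1)*(3*(n:ℚ)+1)*(3*(n:ℚ)+5) * rQ n := by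
  set t := n/2 with htdef
  have hpar : n = 2*t ∨ n = 2*t+1 := by omega
  -- extend sums
  have hr2 : rQ (n+2) = ∑ j ∈ range (n+3), U (n+2) j := by
    rw [rQ, show n+2+1 = n+3 by omega]
  have hr1 : rQ (n+1) = ∑ j ∈ range (n+3), U (n+1) j := by
    rw [show n+3 = (n+1+1)+1 by omega, Finset.sum_range_succ,
      Uzero (n+1) (n+1+1) (by omega), add_zero, rQ]
  have hr0 : rQ n = ∑ j ∈ range (n+3), U n j := by
    rw [show n+3 = ((n+1)+1)+1 by omega, Finset.sum_range_succ,
      Uzero n ((n+1)+1) (by omega), add_zero, Finset.sum_range_succ,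
      Uzero n (n+1) (by omega), add_zero, rQ]
  set T : ℕ → ℚ := fun j => ((n:ℚ)+2)^3 * U (n+2) j
      - 24*(2*(n:ℚ)+3)*(18*(n:ℚ)^2+54*(n:ℚ)+41) * U (n+1) j
      + 20736*((n:ℚ)+1)*(3*(n:ℚ)+1)*(3*(n:ℚ)+5) * U n j with hT
  have hTsum : ∑ j ∈ range (n+3), T j = 0 := by
    have hsplit : ∑ j ∈ range (t+1), T j + ∑ j ∈ Ico (t+1) (n+3), T j
        = ∑ j ∈ range (n+3), T j := by
      rw [Finset.range_eq_Ico, Finset.range_eq_Ico]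
      exact Finset.sum_Ico_consecutive T (m := 0) (n := t+1) (k := n+3) (by omega) (by omega)
    have hpart1 : ∑ j ∈ range (t+1), T j = Hf n (t+1) := by
      have key : ∀ j ∈ range (t+1), T j = Hf n (j+1) - Hf n j := by
        intro j hjm
        have hjt : j ≤ t := Nat.lt_succ_iff.mp (mem_range.mp hjm)
        obtain ⟨s, rfl⟩ : ∃ s, n = s + j := ⟨n - j, by omega⟩
        have hjs : j ≤ s := by omega
        simp only [hT, U, Hf]
        rw [show s+j+2-j = s+2 by omega, show s+j+1-j = s+1 by omega, show s+j-j = s by omega,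
          show s+j+1-(j+1) = s by omega, show s+j+2-(j+1) = s+1 by omega]
        have hp := ptr s j hjs
        push_cast
        push_cast at hp
        linear_combination hp
      rw [Finset.sum_congr rfl key, Finset.sum_range_sub (Hf n), Hf0, sub_zero]
    have hpart2 : ∑ j ∈ Ico (t+1) (n+3), T j = T (t+1) := by
      apply Finset.sum_eq_single_of_mem
      · exact Finset.mem_Ico.mpr ⟨le_refl _, by omega⟩
      · intro b hb hbne
        have hbb : t+2 ≤ b := by
          have := (Finset.mem_Ico.mp hb).1
          omega
        simp only [hT]
        rw [Uzero (n+2) b (by omega), Uzero (n+1) b (by omega), Uzero n b (by omega)]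
        ring
    have hbdy : Hf n (t+1) + T (t+1) = 0 := by
      rcases hpar with he | ho
      · have hb := bdy_even t
        simp only [hT]
        rw [he]
        push_cast at hb ⊢
        linear_combination hb
      · have hb := bdy_odd t
        simp only [hT]
        rw [ho]
        push_cast at hb ⊢
        linear_combination hb
    rw [← hsplit, hpart1, hpart2, hbdy]
  rw [hr2, hr1, hr0]
  rw [Finset.mul_sum, Finset.mul_sum, Finset.mul_sum]
  rw [← sub_eq_zero, ← Finset.sum_sub_distrib, ← Finset.sum_sub_distrib]
  rw [← hTsum]
  apply Finset.sum_congr rfl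
  intro j hj
  simp only [hT]
  ring


lemma c_eq_rQ : ∀ n, (c n : ℚ) = rQ n := by
  have base0 : (c 0 : ℚ) = rQ 0 := by
    rw [c, rQ]
    simp [Finset.sum_range_succ, U, aN, gN]
  have base1 : (c 1 : ℚ) = rQ 1 := by
    rw [c, rQ]
    simp [Finset.sum_range_succ, U]
    rw [show aN 0 = 1 by decide, show aN 1 = 60 by decide, show gN 1 = 120 by decide]
    norm_num
  have step : ∀ n, (c n : ℚ) = rQ n → (c (n+1) : ℚ) = rQ (n+1) → (c (n+2) : ℚ) = rQ (n+2) := by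
    intro n h0 h1
    have hc := congrArg (Int.cast : ℤ → ℚ) (recc n)
    push_cast at hc
    rw [h0, h1] at hc
    rw [← recr n] at hc
    have hne : ((n:ℚ)+2)^3 ≠ 0 := by positivity
    exact mul_left_cancel₀ hne hc
  have main : ∀ n, (c n : ℚ) = rQ n ∧ (c (n+1) : ℚ) = rQ (n+1) := by
    intro n
    induction n with
    | zero => exact ⟨base0, base1⟩
    | succ m ih => exact ⟨ih.2, step m ih.1 ih.2⟩
  exact fun n => (main n).1

lemma c_eq_rZ (n : ℕ) : c n = rZ n := by
  have h := c_eq_rQ n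
  have h2 : (rQ n) = ((rZ n : ℤ) : ℚ) := by
    rw [rQ, rZ]
    push_cast [U]
    rfl
  rw [h2] at h
  exact_mod_cast h

end

-- swap lemma
lemma swap_sum (N : ℕ) (w : ℕ → ℤ) (F : ℕ → ℕ → ℤ) :
    ∑ n ∈ range N, w n * ∑ j ∈ range (n+1), F (n-j) j
      = ∑ m ∈ range N, ∑ j ∈ range (N-m), w (m+j) * F m j := by
  induction N with
  | zero => simp
  | succ N ih =>
    rw [Finset.sum_range_succ, ih]
    have hrefl : ∑ j ∈ range (N+1), F (N-j) j = ∑ m ∈ range (N+1), F m (N-m) := by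
      rw [← Finset.sum_range_reflect (fun m => F m (N-m)) (N+1)]
      apply Finset.sum_congr rfl
      intro j hj
      have hjN : j ≤ N := by
        have := mem_range.mp hj; omega
      rw [show N+1-1-j = N-j by omega, show N-(N-j) = j by omega]
    rw [hrefl]
    have hsplit : ∀ m ∈ range N, ∑ j ∈ range (N+1-m), w (m+j) * F m j
        = (∑ j ∈ range (N-m), w (m+j) * F m j) + w N * F m (N-m) := by
      intro m hm
      have hm' : m < N := mem_range.mp hm
      rw [show N+1-m = (N-m)+1 by omega, Finset.sum_range_succ, show m+(N-m) = N by omega]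
    rw [Finset.sum_range_succ (fun m => ∑ j ∈ range (N+1-m), w (m+j) * F m j) N,
      Finset.sum_congr rfl hsplit, Finset.sum_add_distrib]
    rw [show N+1-N = 1 by omega, Finset.sum_range_one, Finset.sum_range_succ (fun m => F m (N-m)) N,
      show N-N = 0 by omega, mul_add, Finset.mul_sum]
    simp only [Nat.add_zero]
    ring

lemma Wzero (m : ℕ) :
    ∑ j ∈ range (m+1), ((m:ℤ)+j) * (m.choose j : ℤ) * 864^(m-j) * (-432)^j = 0 := by
  have hsplitf : ∀ j ∈ range (m+1), ((m:ℤ)+j) * (m.choose j : ℤ) * 864^(m-j) * (-432)^j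
      = (m:ℤ) * ((-432)^j * 864^(m-j) * (m.choose j : ℤ))
        + (j:ℤ) * (m.choose j : ℤ) * 864^(m-j) * (-432)^j := by
    intro j _; ring
  rw [Finset.sum_congr rfl hsplitf, Finset.sum_add_distrib, ← Finset.mul_sum]
  have hS1 : ∀ s : ℕ, ∑ j ∈ range (s+1), ((-432:ℤ))^j * 864^(s-j) * (s.choose j : ℤ) = 432^s := by
    intro s
    have := add_pow (-432:ℤ) 864 s
    norm_num at this
    rw [← this]
  rw [hS1 m]
  rcases Nat.eq_zero_or_pos m with hm | hm
  · subst hm; simp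
  obtain ⟨s, rfl⟩ : ∃ s, m = s+1 := ⟨m-1, by omega⟩
  have hS2 : ∑ j ∈ range (s+1+1), (j:ℤ) * ((s+1).choose j : ℤ) * 864^(s+1-j) * (-432)^j
      = ((s:ℤ)+1) * (-432) * 432^s := by
    rw [Finset.sum_range_succ']
    push_cast
    have hterm : ∀ j ∈ range (s+1), ((j:ℤ)+1) * (((s+1).choose (j+1)) : ℤ) * 864^(s-j) * (-432)^(j+1)
        = ((s:ℤ)+1) * (-432) * ((-432)^j * 864^(s-j) * (s.choose j : ℤ)) := by
      intro j hj
      have hc := congrArg (Nat.cast : ℕ → ℤ) (Nat.add_one_mul_choose_eq s j)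
      push_cast at hc
      rw [pow_succ]
      linear_combination (864^(s-j) * (-432:ℤ)^j * 432) * hc
    rw [Finset.sum_congr rfl hterm, ← Finset.mul_sum, hS1 s]
    norm_num
  push_cast at hS2 ⊢
  rw [hS2]
  ring

lemma dvd_choose_lucas (p : ℕ) (hp : p.Prime) (n k : ℕ)
    (h : (n % p).choose (k % p) = 0) : p ∣ n.choose k := by
  haveI := Fact.mk hp
  have hl := Choose.choose_modEq_choose_mod_mul_choose_div_nat (p := p) (n := n) (k := k)
  rw [h, zero_mul] at hl
  exact (Nat.modEq_zero_iff_dvd).mp hl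

lemma p_dvd_gN (p m : ℕ) (hp : p.Prime) (hp3 : 3 < p) (hm : m < p) (h2 : p + 1 ≤ 2*m) :
    p^2 ∣ gN m := by
  have h6 : p ∣ aN m := by
    rcases Nat.lt_or_ge (3*m) (2*p) with h | h
    · have hmod6 : (6*m) % p = 6*m - 3*p := by
        rw [Nat.mod_eq_sub_mod (show p ≤ 6*m by omega),
          Nat.mod_eq_sub_mod (show p ≤ 6*m - p by omega),
          Nat.mod_eq_sub_mod (show p ≤ 6*m - p - p by omega),
          show 6*m - p - p - p = 6*m - 3*p by omega]
        exact Nat.mod_eq_of_lt (show 6*m - 3*p < p by omega)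
      have hmod3 : (3*m) % p = 3*m - p := by
        rw [Nat.mod_eq_sub_mod (show p ≤ 3*m by omega)]
        exact Nat.mod_eq_of_lt (show 3*m - p < p by omega)
      have hz : ((6*m) % p).choose ((3*m) % p) = 0 := by
        rw [hmod6, hmod3]
        exact Nat.choose_eq_zero_of_lt (by omega)
      exact Dvd.dvd.mul_right (dvd_choose_lucas p hp (6*m) (3*m) hz) _
    · have hmod3 : (3*m) % p = 3*m - 2*p := by
        rw [Nat.mod_eq_sub_mod (show p ≤ 3*m by omega),
          Nat.mod_eq_sub_mod (show p ≤ 3*m - p by omega),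
          show 3*m - p - p = 3*m - 2*p by omega]
        exact Nat.mod_eq_of_lt (show 3*m - 2*p < p by omega)
      have hz : ((3*m) % p).choose (m % p) = 0 := by
        rw [hmod3, Nat.mod_eq_of_lt hm]
        exact Nat.choose_eq_zero_of_lt (by omega)
      exact Dvd.dvd.mul_left (dvd_choose_lucas p hp (3*m) m hz) _
  have hC : p ∣ (2*m).choose m := Nat.Prime.dvd_choose hp (by omega) (by omega) (by omega)
  rw [gN, pow_two]
  exact mul_dvd_mul h6 hC

theorem stmt_9 (p : ℕ) (hp : p.Prime) (h3 : 3 < p) :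
    p ^ 2 ∣ ∑ n ∈ Finset.range p, n * 864 ^ (p - 1 - n) *
      ∑ k ∈ Finset.range (n + 1),
        (Nat.choose (6 * k) (3 * k)) * (Nat.choose (3 * k) k) *
          (Nat.choose (6 * (n - k)) (3 * (n - k))) * (Nat.choose (3 * (n - k)) (n - k)) := by
  set w : ℕ → ℤ := fun n => (n:ℤ) * 864^(p-1-n) with hw
  set F : ℕ → ℕ → ℤ := fun m j => (gN m:ℤ) * (m.choose j:ℤ) * (-432)^j with hF
  have htrans : ((∑ n ∈ Finset.range p, n * 864 ^ (p - 1 - n) *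
      ∑ k ∈ Finset.range (n + 1),
        (Nat.choose (6 * k) (3 * k)) * (Nat.choose (3 * k) k) *
          (Nat.choose (6 * (n - k)) (3 * (n - k))) * (Nat.choose (3 * (n - k)) (n - k)) : ℕ) : ℤ)
      = ∑ m ∈ range p, ∑ j ∈ range (p-m), w (m+j) * F m j := by
    push_cast
    have hstep : ∀ n ∈ range p, ((n:ℤ) * 864^(p-1-n) * ∑ k ∈ range (n+1),
        (((6*k).choose (3*k)):ℤ) * (((3*k).choose k):ℤ) *
        (((6*(n-k)).choose (3*(n-k))):ℤ) * (((3*(n-k)).choose (n-k)):ℤ))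
        = w n * ∑ j ∈ range (n+1), F (n-j) j := by
      intro n _
      have e1 : (∑ k ∈ range (n+1), (((6*k).choose (3*k)):ℤ) * (((3*k).choose k):ℤ) *
          (((6*(n-k)).choose (3*(n-k))):ℤ) * (((3*(n-k)).choose (n-k)):ℤ)) = c n := by
        rw [c]
        apply Finset.sum_congr rfl
        intro k _
        rw [aN, aN]
        push_cast
        ring
      rw [e1, c_eq_rZ n, rZ]
    rw [Finset.sum_congr rfl hstep, swap_sum p w F]
  rw [← Int.natCast_dvd_natCast, htrans, show ((p^2:ℕ):ℤ) = (p:ℤ)^2 by push_cast; ring]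
  apply Finset.dvd_sum
  intro m hm
  have hmp : m < p := mem_range.mp hm
  by_cases hsm : 2*m+1 ≤ p
  · have hsplit : ∑ j ∈ range (m+1), (w (m+j) * F m j)
        + ∑ j ∈ Ico (m+1) (p-m), (w (m+j) * F m j)
        = ∑ j ∈ range (p-m), w (m+j) * F m j := by
      rw [Finset.range_eq_Ico, Finset.range_eq_Ico]
      exact Finset.sum_Ico_consecutive (fun j => w (m+j) * F m j) (m := 0) (n := m+1) (k := p-m) (by omega) (by omega)
    have hz2 : ∑ j ∈ Ico (m+1) (p-m), w (m+j) * F m j = 0 := by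
      apply Finset.sum_eq_zero
      intro j hj
      have hmj : m < j := by
        have := (Finset.mem_Ico.mp hj).1; omega
      simp [hF, Nat.choose_eq_zero_of_lt hmj]
    have hz1 : ∑ j ∈ range (m+1), w (m+j) * F m j
        = (gN m : ℤ) * 864^(p-1-2*m) * ∑ j ∈ range (m+1),
            ((m:ℤ)+j) * (m.choose j:ℤ) * 864^(m-j) * (-432)^j := by
      rw [Finset.mul_sum]
      apply Finset.sum_congr rfl
      intro j hj
      have hjm : j ≤ m := by
        have := mem_range.mp hj; omega
      simp only [hw, hF]
      rw [show p-1-(m+j) = (p-1-2*m)+(m-j) by omega, pow_add]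
      push_cast
      ring
    have hzero : ∑ j ∈ range (p-m), w (m+j) * F m j = 0 := by
      rw [← hsplit, hz2, hz1, Wzero m]
      ring
    rw [hzero]
    exact dvd_zero _
  · have h2m : p+1 ≤ 2*m := by
      obtain ⟨r, hr⟩ := hp.odd_of_ne_two (by omega)
      omega
    have hdvd := p_dvd_gN p m hp h3 hmp h2m
    apply Finset.dvd_sum
    intro j hj
    have hdint : ((p:ℤ))^2 ∣ (gN m : ℤ) := by
      have := Int.natCast_dvd_natCast.mpr hdvd
      push_cast at this
      exact this
    simp only [hw, hF]
    exact Dvd.dvd.mul_left (Dvd.dvd.mul_right (Dvd.dvd.mul_right hdint _) _) _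
end
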